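/- Let β⁺,β⁻ ∈ L¹([0,1]³) be nonnegative. Then the functional J^{(β⁺,β⁻)} : W₀ → [0,∞) is lower semicontinuous with respect to the weak topology inherited from L²([0,1]³): whenever φ_n, φ ∈ W₀ and φ_n → φ weakly in L²([0,1]³), one has J^{(β⁺,β⁻)}(φ) ≤ liminf_{n→∞} J^{(β⁺,β⁻)}(φ_n). -/

import Mathlib

open MeasureTheory Filter Set
open scoped ENNReal

noncomputable section

/-- The unit interval `[0,1]` as a subset of `ℝ`. -/
def I01 : Set ℝ := Set.Icc 0 1

/-- The unit cube `[0,1]³`. -/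
def cube3 : Set (ℝ × ℝ × ℝ) := I01 ×ˢ I01 ×ˢ I01

/-- Membership in `W₀`: a measurable function `[0,1]³ → [0,1]`. -/
def MemW0 (φ : ℝ × ℝ × ℝ → ℝ) : Prop :=
  Measurable φ ∧ ∀ p ∈ cube3, φ p ∈ Set.Icc (0:ℝ) 1

/-- The rate function
`J^{(β⁺,β⁻)}(φ) = ∫_{[0,1]³} (√(β⁺(1−φ)) − √(β⁻φ))²`. -/
def Jfun (βp βm φ : ℝ × ℝ × ℝ → ℝ) : ℝ :=
  ∫ p in cube3, (Real.sqrt (βp p * (1 - φ p)) - Real.sqrt (βm p * φ p)) ^ 2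

lemma sq_sqrt_sub_eq {A B : ℝ} (hA : 0 ≤ A) (hB : 0 ≤ B) :
    (Real.sqrt A - Real.sqrt B) ^ 2 = A + B - 2 * Real.sqrt (A * B) := by
  rw [sub_sq, Real.sq_sqrt hA, Real.sq_sqrt hB, mul_assoc, ← Real.sqrt_mul hA]
  ring

lemma amgm_aux {A B s : ℝ} (hA : 0 ≤ A) (hB : 0 ≤ B) (hs : 0 < s) :
    A * (1 - s) + B * (1 - 1/s) ≤ (Real.sqrt A - Real.sqrt B) ^ 2 := by
  rw [sq_sqrt_sub_eq hA hB]
  have hs0 : s ≠ 0 := hs.ne'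
  have h1 : (0:ℝ) ≤ A * s := mul_nonneg hA hs.le
  have h2 : (0:ℝ) ≤ B / s := div_nonneg hB hs.le
  have h3 : Real.sqrt (A*s) * Real.sqrt (B/s) = Real.sqrt (A*B) := by
    rw [← Real.sqrt_mul h1]
    congr 1
    field_simp
  have h4 : 2 * Real.sqrt (A*B) ≤ A*s + B/s := by
    nlinarith [sq_nonneg (Real.sqrt (A*s) - Real.sqrt (B/s)), Real.sq_sqrt h1, Real.sq_sqrt h2]
  have h5 : A * (1-s) + B * (1 - 1/s) = A + B - (A*s + B/s) := by field_simp; ring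
  linarith

def sOpt (k A B : ℝ) : ℝ := if A = 0 then k else max (1/k) (min k (Real.sqrt (B/A)))

lemma sOpt_pos {k : ℝ} (hk : 1 ≤ k) (A B : ℝ) : 0 < sOpt k A B := by
  have hk0 : 0 < k := lt_of_lt_of_le one_pos hk
  unfold sOpt
  split
  · exact hk0
  · exact lt_of_lt_of_le (by positivity) (le_max_left _ _)

lemma sOpt_le {k : ℝ} (hk : 1 ≤ k) (A B : ℝ) : sOpt k A B ≤ k := by
  have hk0 : 0 < k := lt_of_lt_of_le one_pos hk
  have h1k : 1/k ≤ k := by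
    rw [div_le_iff₀ hk0]; nlinarith
  unfold sOpt
  split
  · exact le_refl k
  · exact max_le h1k (min_le_left _ _)

lemma one_div_le_sOpt {k : ℝ} (hk : 1 ≤ k) (A B : ℝ) : 1/k ≤ sOpt k A B := by
  have hk0 : 0 < k := lt_of_lt_of_le one_pos hk
  have h1k : 1/k ≤ k := by
    rw [div_le_iff₀ hk0]; nlinarith
  unfold sOpt
  split
  · exact h1k
  · exact le_max_left _ _

lemma sOpt_value_nonneg {k A B : ℝ} (hk : 1 ≤ k) (hA : 0 ≤ A) (hB : 0 ≤ B) :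
    0 ≤ A * (1 - sOpt k A B) + B * (1 - 1/(sOpt k A B)) := by
  have hk0 : 0 < k := lt_of_lt_of_le one_pos hk
  have h1k : 1/k ≤ k := by rw [div_le_iff₀ hk0]; nlinarith
  unfold sOpt
  split
  case isTrue hA0 =>
    rw [hA0]
    have hle : 1/k ≤ 1 := by rw [div_le_one hk0]; exact hk
    nlinarith
  case isFalse hA0 =>
    have hApos : 0 < A := lt_of_le_of_ne hA (Ne.symm hA0)
    set x := Real.sqrt (B/A) with hxdef
    have hx0 : 0 ≤ x := Real.sqrt_nonneg _
    have hx2 : x^2 = B/A := Real.sq_sqrt (div_nonneg hB hApos.le)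
    have hBx : B = A * x^2 := by rw [hx2]; field_simp
    rcases le_or_gt k x with hcase | hcase
    · -- sOpt = k
      rw [min_eq_left hcase, max_eq_right h1k]
      have hu : (1/k) * k = 1 := one_div_mul_cancel hk0.ne'
      have hu1 : 1/k ≤ 1 := by rw [div_le_one hk0]; exact hk
      have hu0 : 0 ≤ 1/k := by positivity
      have hxk : k^2 ≤ x^2 := by nlinarith [mul_self_le_mul_self hk0.le hcase]
      have hBge : A*(k^2) ≤ B := by nlinarith [mul_le_mul_of_nonneg_left hxk hApos.le]
      have step1 : A*(k^2)*(1-1/k) ≤ B*(1-1/k) :=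
        mul_le_mul_of_nonneg_right hBge (by linarith)
      have step2 : A*(k^2)*(1-1/k) = A*(k^2) - A*k := by field_simp
      nlinarith [mul_nonneg hApos.le (sq_nonneg (k-1))]
    · rw [min_eq_right hcase.le]
      rcases le_or_gt x (1/k) with hcase2 | hcase2
      · -- sOpt = 1/k
        rw [max_eq_left hcase2]
        rw [one_div_one_div]
        have hu : (1/k) * k = 1 := one_div_mul_cancel hk0.ne'
        have hu0 : 0 ≤ 1/k := by positivity
        have hxle : x^2 ≤ (1/k)^2 := by nlinarith [mul_self_le_mul_self hx0 hcase2]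
        have hBle : B ≤ A*(1/k)^2 := by nlinarith [mul_le_mul_of_nonneg_left hxle hApos.le]
        have step1 : A*((1/k)^2)*(1-k) ≤ B*(1-k) :=
          mul_le_mul_of_nonpos_right hBle (by linarith)
        have step2 : A*((1/k)^2)*(1-k) = A*((1/k)^2) - A*(1/k) := by field_simp
        nlinarith [mul_nonneg hApos.le (sq_nonneg (1-(1/k)))]
      · -- sOpt = x
        rw [max_eq_right hcase2.le]
        have hxpos : 0 < x := lt_trans (by positivity) hcase2
        have e1 : B*(1 - 1/x) = A*x^2 - A*x := by
          rw [hBx]; field_simp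
        nlinarith [mul_nonneg hApos.le (sq_nonneg (1-x))]

lemma sOpt_tendsto {A B : ℝ} (hA : 0 ≤ A) (hB : 0 ≤ B) :
    Tendsto (fun k : ℕ => A * (1 - sOpt k A B) + B * (1 - 1/(sOpt (k:ℝ) A B))) atTop
      (nhds ((Real.sqrt A - Real.sqrt B)^2)) := by
  rcases eq_or_lt_of_le hA with hA0 | hApos
  · -- A = 0
    have hEq : ∀ k : ℕ, A * (1 - sOpt k A B) + B * (1 - 1/(sOpt (k:ℝ) A B))
        = B * (1 - 1/(k:ℝ)) := by
      intro k
      rw [← hA0]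
      simp [sOpt]
    have hT : Tendsto (fun k : ℕ => B * (1 - 1/(k:ℝ))) atTop (nhds (B * (1 - 0))) :=
      (tendsto_const_nhds.sub tendsto_one_div_atTop_nhds_zero_nat).const_mul B
    have htar : (Real.sqrt A - Real.sqrt B)^2 = B * (1 - 0) := by
      rw [← hA0, Real.sqrt_zero]
      simp [Real.sq_sqrt hB]
    rw [htar]
    exact hT.congr (fun k => (hEq k).symm)
  · rcases eq_or_lt_of_le hB with hB0 | hBpos
    · -- B = 0, A > 0
      have hx : Real.sqrt ((B:ℝ)/A) = 0 := by rw [← hB0]; simp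
      have hEq : ∀ k : ℕ, A * (1 - sOpt k A B) + B * (1 - 1/(sOpt (k:ℝ) A B))
          = A * (1 - 1/(k:ℝ)) := by
        intro k
        have : sOpt (k:ℝ) A B = 1/(k:ℝ) := by
          unfold sOpt
          rw [if_neg hApos.ne', hx, min_eq_right (Nat.cast_nonneg k),
            max_eq_left (by positivity)]
        rw [this, ← hB0]
        ring
      have hT : Tendsto (fun k : ℕ => A * (1 - 1/(k:ℝ))) atTop (nhds (A * (1 - 0))) :=
        (tendsto_const_nhds.sub tendsto_one_div_atTop_nhds_zero_nat).const_mul A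
      have htar : (Real.sqrt A - Real.sqrt B)^2 = A * (1 - 0) := by
        rw [← hB0, Real.sqrt_zero]
        simp [Real.sq_sqrt hApos.le]
      rw [htar]
      exact hT.congr (fun k => (hEq k).symm)
    · -- A > 0, B > 0
      set x := Real.sqrt (B/A) with hxdef
      have hxpos : 0 < x := Real.sqrt_pos.2 (div_pos hBpos hApos)
      have hx2 : x^2 = B/A := Real.sq_sqrt (div_nonneg hB hApos.le)
      have hBx : B = A * x^2 := by rw [hx2]; field_simp
      have hsB : Real.sqrt B = Real.sqrt A * x := by
        rw [hBx, Real.sqrt_mul hApos.le, Real.sqrt_sq hxpos.le]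
      have hval : A * (1 - x) + B * (1 - 1/x) = (Real.sqrt A - Real.sqrt B)^2 := by
        have e1 : B*(1 - 1/x) = A*x^2 - A*x := by rw [hBx]; field_simp
        have e2 : (Real.sqrt A - Real.sqrt A * x)^2 = (Real.sqrt A)^2 * (1-x)^2 := by ring
        rw [hsB, e2, Real.sq_sqrt hApos.le]
        linear_combination e1
      have hEv : ∀ᶠ k : ℕ in atTop,
          A * (1 - sOpt k A B) + B * (1 - 1/(sOpt (k:ℝ) A B))
            = (Real.sqrt A - Real.sqrt B)^2 := by
        filter_upwards [eventually_ge_atTop (⌈x⌉₊), eventually_ge_atTop (⌈1/x⌉₊)]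
          with k hk1 hk2
        have hkx : x ≤ (k:ℝ) := le_trans (Nat.le_ceil x) (by exact_mod_cast hk1)
        have hkx2 : 1/x ≤ (k:ℝ) := le_trans (Nat.le_ceil _) (by exact_mod_cast hk2)
        have hk0 : (0:ℝ) < k := lt_of_lt_of_le (by positivity) hkx2
        have hinv : x * (1/x) = 1 := by field_simp
        have h1k : 1/(k:ℝ) ≤ x := by
          rw [div_le_iff₀ hk0]
          nlinarith [mul_le_mul_of_nonneg_left hkx2 hxpos.le]
        have hsopt : sOpt (k:ℝ) A B = x := by
          unfold sOpt
          rw [if_neg hApos.ne', min_eq_right hkx, max_eq_right h1k]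
        rw [hsopt, hval]
      exact Filter.Tendsto.congr' (Filter.EventuallyEq.symm hEv) tendsto_const_nhds

def Ffun (βp βm ψ : ℝ × ℝ × ℝ → ℝ) (p : ℝ × ℝ × ℝ) : ℝ :=
  (Real.sqrt (βp p * (1 - ψ p)) - Real.sqrt (βm p * ψ p)) ^ 2

lemma Jfun_eq (βp βm ψ : ℝ × ℝ × ℝ → ℝ) :
    Jfun βp βm ψ = ∫ p in cube3, Ffun βp βm ψ p := rfl

def sfun (βp βm φ : ℝ × ℝ × ℝ → ℝ) (k : ℝ) (p : ℝ × ℝ × ℝ) : ℝ :=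
  if βp p ≤ k ∧ βm p ≤ k then sOpt k (βp p * (1 - φ p)) (βm p * φ p) else 1

def gfun (βp βm φ : ℝ × ℝ × ℝ → ℝ) (k : ℝ) (p : ℝ × ℝ × ℝ) : ℝ :=
  βm p * (1 - 1/(sfun βp βm φ k p)) - βp p * (1 - sfun βp βm φ k p)

def cfun (βp βm φ : ℝ × ℝ × ℝ → ℝ) (k : ℝ) (p : ℝ × ℝ × ℝ) : ℝ :=
  βp p * (1 - sfun βp βm φ k p)

def hfun (βp βm φ ψ : ℝ × ℝ × ℝ → ℝ) (k : ℝ) (p : ℝ × ℝ × ℝ) : ℝ :=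
  βp p * (1 - ψ p) * (1 - sfun βp βm φ k p)
    + βm p * ψ p * (1 - 1/(sfun βp βm φ k p))

lemma hfun_eq (βp βm φ ψ : ℝ × ℝ × ℝ → ℝ) (k : ℝ) (p : ℝ × ℝ × ℝ) :
    hfun βp βm φ ψ k p = cfun βp βm φ k p + ψ p * gfun βp βm φ k p := by
  unfold hfun cfun gfun; ring

lemma sfun_pos {k : ℝ} (hk : 1 ≤ k) (βp βm φ : ℝ × ℝ × ℝ → ℝ) (p : ℝ × ℝ × ℝ) :
    0 < sfun βp βm φ k p := by
  unfold sfun; split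
  · exact sOpt_pos hk _ _
  · exact one_pos

lemma sfun_le {k : ℝ} (hk : 1 ≤ k) (βp βm φ : ℝ × ℝ × ℝ → ℝ) (p : ℝ × ℝ × ℝ) :
    sfun βp βm φ k p ≤ k := by
  unfold sfun; split
  · exact sOpt_le hk _ _
  · exact hk

lemma one_div_le_sfun {k : ℝ} (hk : 1 ≤ k) (βp βm φ : ℝ × ℝ × ℝ → ℝ) (p : ℝ × ℝ × ℝ) :
    1/k ≤ sfun βp βm φ k p := by
  unfold sfun; split
  · exact one_div_le_sOpt hk _ _
  · rw [div_le_one (by linarith)]; exact hk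

lemma abs_one_sub_sfun {k : ℝ} (hk : 1 ≤ k) (βp βm φ : ℝ × ℝ × ℝ → ℝ) (p : ℝ × ℝ × ℝ) :
    |1 - sfun βp βm φ k p| ≤ 1 + k := by
  have h1 := sfun_pos hk βp βm φ p
  have h2 := sfun_le hk βp βm φ p
  rw [abs_le]; constructor <;> linarith

lemma abs_one_sub_inv_sfun {k : ℝ} (hk : 1 ≤ k) (βp βm φ : ℝ × ℝ × ℝ → ℝ) (p : ℝ × ℝ × ℝ) :
    |1 - 1/(sfun βp βm φ k p)| ≤ 1 + k := by
  have hk0 : (0:ℝ) < k := by linarith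
  have h1 := sfun_pos hk βp βm φ p
  have h2 := one_div_le_sfun hk βp βm φ p
  have h3 : 1/(sfun βp βm φ k p) ≤ k := by
    have := one_div_le_one_div_of_le (by positivity : (0:ℝ) < 1/k) h2
    rwa [one_div_one_div] at this
  have h4 : 0 ≤ 1/(sfun βp βm φ k p) := by positivity
  rw [abs_le]; constructor <;> linarith

lemma sfun_meas {βp βm φ : ℝ × ℝ × ℝ → ℝ} (hβp : Measurable βp) (hβm : Measurable βm)
    (hφ : Measurable φ) (k : ℝ) : Measurable (sfun βp βm φ k) := by
  have hA : Measurable fun p : ℝ × ℝ × ℝ => βp p * (1 - φ p) :=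
    hβp.mul (measurable_const.sub hφ)
  have hB : Measurable fun p : ℝ × ℝ × ℝ => βm p * φ p := hβm.mul hφ
  unfold sfun sOpt
  refine Measurable.ite ?_ ?_ measurable_const
  · simp only [Set.setOf_and]
    exact (measurableSet_le hβp measurable_const).inter (measurableSet_le hβm measurable_const)
  · refine Measurable.ite ?_ measurable_const ?_
    · exact measurableSet_eq_fun hA measurable_const
    · exact measurable_const.max (measurable_const.min
        (Real.continuous_sqrt.measurable.comp (hB.div hA)))

lemma gfun_meas {βp βm φ : ℝ × ℝ × ℝ → ℝ} (hβp : Measurable βp) (hβm : Measurable βm)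
    (hφ : Measurable φ) (k : ℝ) : Measurable (gfun βp βm φ k) := by
  have hs := sfun_meas hβp hβm hφ k
  exact (hβm.mul (measurable_const.sub (measurable_const.div hs))).sub
    (hβp.mul (measurable_const.sub hs))

lemma gfun_bound {βp βm φ : ℝ × ℝ × ℝ → ℝ} (hβp : ∀ p, 0 ≤ βp p) (hβm : ∀ p, 0 ≤ βm p)
    {k : ℝ} (hk : 1 ≤ k) (p : ℝ × ℝ × ℝ) :
    |gfun βp βm φ k p| ≤ 2*k*(1+k) := by
  have e1 := abs_one_sub_inv_sfun hk βp βm φ p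
  have e2 := abs_one_sub_sfun hk βp βm φ p
  unfold gfun
  unfold sfun at e1 e2 ⊢
  split
  case isTrue h =>
    obtain ⟨h1, h2⟩ := h
    rw [if_pos ⟨h1, h2⟩] at e1 e2
    have t1 : |βm p * (1 - 1/(sOpt k (βp p * (1 - φ p)) (βm p * φ p)))| ≤ k * (1+k) := by
      rw [abs_mul, abs_of_nonneg (hβm p)]
      exact mul_le_mul h2 e1 (abs_nonneg _) (by linarith)
    have t2 : |βp p * (1 - sOpt k (βp p * (1 - φ p)) (βm p * φ p))| ≤ k * (1+k) := by
      rw [abs_mul, abs_of_nonneg (hβp p)]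
      exact mul_le_mul h1 e2 (abs_nonneg _) (by linarith)
    calc |βm p * (1 - 1/(sOpt k (βp p * (1 - φ p)) (βm p * φ p)))
          - βp p * (1 - sOpt k (βp p * (1 - φ p)) (βm p * φ p))|
        ≤ |βm p * (1 - 1/(sOpt k (βp p * (1 - φ p)) (βm p * φ p)))|
          + |βp p * (1 - sOpt k (βp p * (1 - φ p)) (βm p * φ p))| := abs_sub _ _
      _ ≤ k*(1+k) + k*(1+k) := add_le_add t1 t2
      _ = 2*k*(1+k) := by ring
  case isFalse h =>
    simp only [div_one, sub_self, mul_zero, zero_sub, abs_neg, abs_zero]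
    norm_num
    positivity
theorem Jfun_weakly_lowerSemicontinuous
    (βp βm : ℝ × ℝ × ℝ → ℝ)
    (hβp_meas : Measurable βp) (hβm_meas : Measurable βm)
    (hβp_nonneg : ∀ p, 0 ≤ βp p) (hβm_nonneg : ∀ p, 0 ≤ βm p)
    (hβp_int : IntegrableOn βp cube3) (hβm_int : IntegrableOn βm cube3)
    (φseq : ℕ → ℝ × ℝ × ℝ → ℝ) (φ : ℝ × ℝ × ℝ → ℝ)
    (hφseq : ∀ n, MemW0 (φseq n)) (hφ : MemW0 φ)
    (hweak : ∀ g : ℝ × ℝ × ℝ → ℝ, MemLp g 2 (volume.restrict cube3) →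
      Tendsto (fun n => ∫ p in cube3, φseq n p * g p) atTop
        (nhds (∫ p in cube3, φ p * g p))) :
    Jfun βp βm φ ≤ Filter.liminf (fun n => Jfun βp βm (φseq n)) atTop := by
  classical
  obtain ⟨hφm, hφ01⟩ := hφ
  have hcube : MeasurableSet cube3 := by
    unfold cube3 I01
    exact measurableSet_Icc.prod (measurableSet_Icc.prod measurableSet_Icc)
  haveI hfinI : IsFiniteMeasure (volume.restrict cube3) := by
    constructor
    rw [Measure.restrict_apply_univ]
    have h2 : volume (I01 ×ˢ I01 : Set (ℝ × ℝ)) = 1 := by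
      rw [Measure.volume_eq_prod, Measure.prod_prod]
      unfold I01
      rw [Real.volume_Icc]
      norm_num
    have hvol : volume cube3 = 1 := by
      unfold cube3
      rw [Measure.volume_eq_prod, Measure.prod_prod, h2]
      unfold I01
      rw [Real.volume_Icc]
      norm_num
    rw [hvol]; exact ENNReal.one_lt_top
  have hbint : IntegrableOn (fun p => 2*(βp p + βm p)) cube3 :=
    (hβp_int.add hβm_int).const_mul 2
  have hFmeas : ∀ ψ : ℝ × ℝ × ℝ → ℝ, Measurable ψ → Measurable (Ffun βp βm ψ) := by
    intro ψ hψ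
    exact ((hβp_meas.mul (measurable_const.sub hψ)).sqrt.sub
      ((hβm_meas.mul hψ).sqrt)).pow_const 2
  have hFbound : ∀ ψ : ℝ × ℝ × ℝ → ℝ, (∀ p ∈ cube3, ψ p ∈ Set.Icc (0:ℝ) 1) →
      ∀ p ∈ cube3, Ffun βp βm ψ p ≤ 2*(βp p + βm p) := by
    intro ψ hψ p hp
    obtain ⟨h0, h1⟩ := hψ p hp
    have ha : 0 ≤ βp p * (1 - ψ p) := mul_nonneg (hβp_nonneg p) (by linarith)
    have hb : 0 ≤ βm p * ψ p := mul_nonneg (hβm_nonneg p) h0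
    have ha' : βp p * (1 - ψ p) ≤ βp p := by nlinarith [mul_nonneg (hβp_nonneg p) h0]
    have hb' : βm p * ψ p ≤ βm p := by
      nlinarith [mul_nonneg (hβm_nonneg p) (by linarith : (0:ℝ) ≤ 1 - ψ p)]
    have h1' := Real.sq_sqrt ha
    have h2' := Real.sq_sqrt hb
    unfold Ffun
    nlinarith [sq_nonneg (Real.sqrt (βp p * (1 - ψ p)) + Real.sqrt (βm p * ψ p))]
  have hFint : ∀ ψ : ℝ × ℝ × ℝ → ℝ, Measurable ψ → (∀ p ∈ cube3, ψ p ∈ Set.Icc (0:ℝ) 1) →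
      IntegrableOn (Ffun βp βm ψ) cube3 := by
    intro ψ hψm hψ01
    refine Integrable.mono' hbint ((hFmeas ψ hψm).aestronglyMeasurable) ?_
    refine (ae_restrict_iff' hcube).2 (ae_of_all _ fun p hp => ?_)
    have h0 : 0 ≤ Ffun βp βm ψ p := by unfold Ffun; positivity
    rw [Real.norm_eq_abs, abs_of_nonneg h0]
    exact hFbound ψ hψ01 p hp
  have hJnonneg : ∀ n, 0 ≤ Jfun βp βm (φseq n) := by
    intro n
    unfold Jfun
    exact integral_nonneg fun p => sq_nonneg _
  have hJub : ∀ n, Jfun βp βm (φseq n) ≤ ∫ p in cube3, 2*(βp p + βm p) := by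
    intro n
    rw [Jfun_eq]
    exact setIntegral_mono_on (hFint _ (hφseq n).1 (hφseq n).2) hbint hcube
      (hFbound _ (hφseq n).2)
  -- the key inequality for each k
  have hkey : ∀ k : ℕ, 1 ≤ (k:ℝ) →
      (∫ p in cube3, hfun βp βm φ φ (k:ℝ) p)
        ≤ liminf (fun n => Jfun βp βm (φseq n)) atTop := by
    intro k hk
    have hsm : Measurable (sfun βp βm φ (k:ℝ)) := sfun_meas hβp_meas hβm_meas hφm _
    have hgm : Measurable (gfun βp βm φ (k:ℝ)) := gfun_meas hβp_meas hβm_meas hφm _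
    have hbint2 : IntegrableOn (fun p => (1+(k:ℝ))*(βp p + βm p)) cube3 :=
      (hβp_int.add hβm_int).const_mul _
    have hcint : IntegrableOn (cfun βp βm φ (k:ℝ)) cube3 := by
      refine Integrable.mono' hbint2
        ((hβp_meas.mul (measurable_const.sub hsm)).aestronglyMeasurable)
        (ae_of_all _ fun p => ?_)
      rw [Real.norm_eq_abs]
      show |cfun βp βm φ (k:ℝ) p| ≤ _
      unfold cfun
      rw [abs_mul, abs_of_nonneg (hβp_nonneg p)]
      have h2t := abs_one_sub_sfun hk βp βm φ p
      nlinarith [hβp_nonneg p, hβm_nonneg p, abs_nonneg (1 - sfun βp βm φ (k:ℝ) p)]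
    have hψg : ∀ ψ : ℝ × ℝ × ℝ → ℝ, Measurable ψ → (∀ p ∈ cube3, ψ p ∈ Set.Icc (0:ℝ) 1) →
        IntegrableOn (fun p => ψ p * gfun βp βm φ (k:ℝ) p) cube3 := by
      intro ψ hψm hψ01
      refine Integrable.mono' (integrable_const (2*(k:ℝ)*(1+(k:ℝ))))
        ((hψm.mul hgm).aestronglyMeasurable)
        ((ae_restrict_iff' hcube).2 (ae_of_all _ fun p hp => ?_))
      rw [Real.norm_eq_abs, abs_mul]
      obtain ⟨h0, h1⟩ := hψ01 p hp
      have hgb := gfun_bound hβp_nonneg hβm_nonneg hk p (φ := φ)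
      have habs : |ψ p| ≤ 1 := abs_le.2 ⟨by linarith, h1⟩
      nlinarith [abs_nonneg (gfun βp βm φ (k:ℝ) p), abs_nonneg (ψ p)]
    have hgL2 : MemLp (gfun βp βm φ (k:ℝ)) 2 (volume.restrict cube3) :=
      MemLp.of_bound hgm.aestronglyMeasurable (2*(k:ℝ)*(1+(k:ℝ)))
        (ae_of_all _ fun p => by
          rw [Real.norm_eq_abs]; exact gfun_bound hβp_nonneg hβm_nonneg hk p)
    have hLeq : ∀ ψ : ℝ × ℝ × ℝ → ℝ, Measurable ψ →
        (∀ p ∈ cube3, ψ p ∈ Set.Icc (0:ℝ) 1) →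
        (∫ p in cube3, hfun βp βm φ ψ (k:ℝ) p)
          = (∫ p in cube3, cfun βp βm φ (k:ℝ) p)
            + ∫ p in cube3, ψ p * gfun βp βm φ (k:ℝ) p := by
      intro ψ hψm hψ01
      rw [← integral_add hcint (hψg ψ hψm hψ01)]
      exact integral_congr_ae (ae_of_all _ fun p => hfun_eq βp βm φ ψ _ p)
    have hmono : ∀ n, (∫ p in cube3, hfun βp βm φ (φseq n) (k:ℝ) p)
        ≤ Jfun βp βm (φseq n) := by
      intro n
      obtain ⟨hnm, hn01⟩ := hφseq n
      rw [Jfun_eq]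
      refine setIntegral_mono_on ?_ (hFint _ hnm hn01) hcube ?_
      · exact Integrable.congr (hcint.add (hψg _ hnm hn01))
          (ae_of_all _ fun p => (hfun_eq βp βm φ (φseq n) _ p).symm)
      · intro p hp
        obtain ⟨h0, h1⟩ := hn01 p hp
        have ha : 0 ≤ βp p * (1 - φseq n p) := mul_nonneg (hβp_nonneg p) (by linarith)
        have hb : 0 ≤ βm p * φseq n p := mul_nonneg (hβm_nonneg p) h0
        exact amgm_aux ha hb (sfun_pos hk βp βm φ p)
    have hT : Tendsto (fun n => ∫ p in cube3, hfun βp βm φ (φseq n) (k:ℝ) p) atTop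
        (nhds (∫ p in cube3, hfun βp βm φ φ (k:ℝ) p)) := by
      rw [hLeq φ hφm hφ01]
      have h := (hweak (gfun βp βm φ (k:ℝ)) hgL2).const_add
        (∫ p in cube3, cfun βp βm φ (k:ℝ) p)
      refine h.congr fun n => ?_
      exact (hLeq (φseq n) (hφseq n).1 (hφseq n).2).symm
    calc (∫ p in cube3, hfun βp βm φ φ (k:ℝ) p)
        = liminf (fun n => ∫ p in cube3, hfun βp βm φ (φseq n) (k:ℝ) p) atTop :=
          hT.liminf_eq.symm
      _ ≤ liminf (fun n => Jfun βp βm (φseq n)) atTop := by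
          refine liminf_le_liminf (Eventually.of_forall hmono) ?_ ?_
          · exact hT.isBoundedUnder_ge
          · exact isCoboundedUnder_ge_of_le atTop fun n => hJub n
  -- dominated convergence
  have hDC : Tendsto (fun m : ℕ => ∫ p in cube3, hfun βp βm φ φ ((m+1 : ℕ):ℝ) p) atTop
      (nhds (Jfun βp βm φ)) := by
    rw [Jfun_eq]
    apply tendsto_integral_of_dominated_convergence (fun p => 2*(βp p + βm p))
    · intro m
      have hsm : Measurable (sfun βp βm φ ((m+1:ℕ):ℝ)) := sfun_meas hβp_meas hβm_meas hφm _
      exact (((hβp_meas.mul (measurable_const.sub hφm)).mul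
        (measurable_const.sub hsm)).add ((hβm_meas.mul hφm).mul
        (measurable_const.sub (measurable_const.div hsm)))).aestronglyMeasurable
    · exact hbint
    · intro m
      refine (ae_restrict_iff' hcube).2 (ae_of_all _ fun p hp => ?_)
      have hk1 : (1:ℝ) ≤ ((m+1 : ℕ):ℝ) := by exact_mod_cast Nat.succ_le_succ (Nat.zero_le m)
      obtain ⟨h0, h1⟩ := hφ01 p hp
      have ha : 0 ≤ βp p * (1 - φ p) := mul_nonneg (hβp_nonneg p) (by linarith)
      have hb : 0 ≤ βm p * φ p := mul_nonneg (hβm_nonneg p) h0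
      have hnon : 0 ≤ hfun βp βm φ φ ((m+1:ℕ):ℝ) p := by
        unfold hfun sfun
        split
        · exact sOpt_value_nonneg hk1 ha hb
        · simp
      have hub : hfun βp βm φ φ ((m+1:ℕ):ℝ) p ≤ Ffun βp βm φ p :=
        amgm_aux ha hb (sfun_pos hk1 βp βm φ p)
      rw [Real.norm_eq_abs, abs_of_nonneg hnon]
      exact le_trans hub (hFbound φ hφ01 p hp)
    · refine (ae_restrict_iff' hcube).2 (ae_of_all _ fun p hp => ?_)
      obtain ⟨h0, h1⟩ := hφ01 p hp
      have ha : 0 ≤ βp p * (1 - φ p) := mul_nonneg (hβp_nonneg p) (by linarith)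
      have hb : 0 ≤ βm p * φ p := mul_nonneg (hβm_nonneg p) h0
      have hbase := (sOpt_tendsto ha hb).comp (tendsto_add_atTop_nat 1)
      refine Tendsto.congr' ?_ hbase
      filter_upwards [eventually_ge_atTop ⌈βp p⌉₊, eventually_ge_atTop ⌈βm p⌉₊]
        with m h1m h2m
      have hc1 : βp p ≤ ((m+1:ℕ):ℝ) := by
        refine le_trans (Nat.le_ceil _) ?_
        exact_mod_cast Nat.le_succ_of_le h1m
      have hc2 : βm p ≤ ((m+1:ℕ):ℝ) := by
        refine le_trans (Nat.le_ceil _) ?_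
        exact_mod_cast Nat.le_succ_of_le h2m
      show βp p * (1 - φ p) * (1 - sOpt ((m+1:ℕ):ℝ) (βp p * (1 - φ p)) (βm p * φ p))
          + βm p * φ p * (1 - 1/(sOpt ((m+1:ℕ):ℝ) (βp p * (1 - φ p)) (βm p * φ p)))
        = hfun βp βm φ φ ((m+1:ℕ):ℝ) p
      unfold hfun sfun
      rw [if_pos ⟨hc1, hc2⟩]
  have hle : ∀ m : ℕ, (∫ p in cube3, hfun βp βm φ φ ((m+1:ℕ):ℝ) p)
      ≤ liminf (fun n => Jfun βp βm (φseq n)) atTop := fun m =>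
    hkey (m+1) (by exact_mod_cast Nat.succ_le_succ (Nat.zero_le m))
  exact le_of_tendsto hDC (Eventually.of_forall hle)
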